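/- (Proposition 1.) Let X ⊂ ℝ^{n_x} be a nonempty compact set, let x : [0,∞) → ℝ^{n_x} be differentiable with x'(t) = f(x(t)) and x(t) ∈ X for all t ≥ 0, and let ẑ : [0,∞) → ℝ^{n_z} be differentiable with ẑ'(t) = A ẑ(t) + B h(x(t)) for all t ≥ 0. Let T̂ : ℝ^{n_x} → ℝ^{n_z} be continuously differentiable with PDE residual R, set R̄ := sup_{x∈X} ‖R(x)‖ and e_z(t) := ẑ(t) − T̂(x(t)). Let Q ∈ ℝ^{n_z×n_z} and P ∈ ℝ^{n_z×n_z} be symmetric positive definite with P A + Aᵀ P = −Q. Then limsup_{t→∞} ‖e_z(t)‖ ≤ √(4·λ_max(P)/(λ_min(Q)·λ_min(P)))·‖Q^{−1/2}P‖·R̄. -/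

import Mathlib

open Filter Matrix

/-- Euclidean space `ℝ^n`. -/
abbrev E (n : ℕ) := EuclideanSpace ℝ (Fin n)

/-- Smallest eigenvalue of a (Hermitian) real matrix. -/
noncomputable def lamMin {n : ℕ} (M : Matrix (Fin n) (Fin n) ℝ) : ℝ :=
  if h : M.IsHermitian then ⨅ i, h.eigenvalues i else 0

/-- Largest eigenvalue of a (Hermitian) real matrix. -/
noncomputable def lamMax {n : ℕ} (M : Matrix (Fin n) (Fin n) ℝ) : ℝ :=
  if h : M.IsHermitian then ⨆ i, h.eigenvalues i else 0

open scoped Classical in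
/-- The positive semidefinite square root `M^{1/2}` of a positive semidefinite matrix. -/
noncomputable def matSqrt {n : ℕ} (M : Matrix (Fin n) (Fin n) ℝ) : Matrix (Fin n) (Fin n) ℝ :=
  if h : M.PosSemidef then
    h.1.eigenvectorUnitary.1 * diagonal ((RCLike.ofReal : ℝ → ℝ) ∘ (√·) ∘ h.1.eigenvalues) *
      (star h.1.eigenvectorUnitary : Matrix (Fin n) (Fin n) ℝ)
  else 0

/-- `M^{-1/2} := (M^{1/2})⁻¹`. -/
noncomputable def invSqrt {n : ℕ} (M : Matrix (Fin n) (Fin n) ℝ) : Matrix (Fin n) (Fin n) ℝ :=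
  (matSqrt M)⁻¹

/-- Operator norm of a matrix induced by the Euclidean norms. -/
noncomputable def opNorm {m n : ℕ} (M : Matrix (Fin m) (Fin n) ℝ) : ℝ :=
  ‖LinearMap.toContinuousLinearMap (Matrix.toEuclideanLin M)‖

/-- Matrix-vector multiplication as a map between Euclidean spaces. -/
def mv {m n : ℕ} (M : Matrix (Fin m) (Fin n) ℝ) (v : E n) : E m := WithLp.toLp 2 (M.mulVec v)

open scoped RealInnerProductSpace

section Helpers

lemma mv_eq_lin {m n : ℕ} (M : Matrix (Fin m) (Fin n) ℝ) :
    mv M = ⇑(LinearMap.toContinuousLinearMap (Matrix.toEuclideanLin M)) := rfl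

lemma opNorm_nonneg' {m n : ℕ} (M : Matrix (Fin m) (Fin n) ℝ) : 0 ≤ opNorm M :=
  norm_nonneg _

lemma norm_mv_le {m n : ℕ} (M : Matrix (Fin m) (Fin n) ℝ) (v : E n) :
    ‖mv M v‖ ≤ opNorm M * ‖v‖ := by
  rw [mv_eq_lin]; exact (LinearMap.toContinuousLinearMap (Matrix.toEuclideanLin M)).le_opNorm v

lemma mv_continuous {m n : ℕ} (M : Matrix (Fin m) (Fin n) ℝ) : Continuous (mv M) := by
  rw [mv_eq_lin]; exact (LinearMap.toContinuousLinearMap (Matrix.toEuclideanLin M)).continuous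

lemma inner_mv {m n : ℕ} (M : Matrix (Fin m) (Fin n) ℝ) (u : E n) (v : E m) :
    ⟪mv M u, v⟫ = ⟪u, mv Mᵀ v⟫ := by
  simp only [mv, PiLp.inner_apply, RCLike.inner_apply, starRingEnd_apply, star_trivial,
    Matrix.mulVec, dotProduct, Matrix.transpose_apply, Finset.sum_mul, Finset.mul_sum]
  rw [Finset.sum_comm]
  congr 1; ext i; congr 1; ext j; ring

lemma mv_mv {m n p : ℕ} (M : Matrix (Fin m) (Fin n) ℝ) (N : Matrix (Fin n) (Fin p) ℝ) (v : E p) :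
    mv M (mv N v) = mv (M * N) v := by
  simp [mv, Matrix.mulVec_mulVec]

lemma mv_sub {m n : ℕ} (M : Matrix (Fin m) (Fin n) ℝ) (u v : E n) :
    mv M (u - v) = mv M u - mv M v := by
  ext i
  simp [mv, Matrix.mulVec, dotProduct, mul_sub, Finset.sum_sub_distrib]

lemma mv_add_mat {m n : ℕ} (M N : Matrix (Fin m) (Fin n) ℝ) (v : E n) :
    mv (M + N) v = mv M v + mv N v := by
  ext i
  simp [mv, Matrix.mulVec, dotProduct, add_mul, Finset.sum_add_distrib]

lemma mv_neg_mat {m n : ℕ} (M : Matrix (Fin m) (Fin n) ℝ) (v : E n) :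
    mv (-M) v = -(mv M v) := by
  ext i
  simp [mv, Matrix.mulVec, dotProduct]

lemma repr_mv {n : ℕ} {M : Matrix (Fin n) (Fin n) ℝ} (hM : M.IsHermitian) (v : E n) (j : Fin n) :
    hM.eigenvectorBasis.repr (mv M v) j = hM.eigenvalues j * hM.eigenvectorBasis.repr v j := by
  rw [OrthonormalBasis.repr_apply_apply, OrthonormalBasis.repr_apply_apply,
    real_inner_comm, inner_mv]
  have ht : Mᵀ = M := by
    have := hM.eq
    rwa [Matrix.conjTranspose_eq_transpose_of_trivial] at this
  rw [ht]
  have hmv : mv M (hM.eigenvectorBasis j) = hM.eigenvalues j • hM.eigenvectorBasis j := by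
    have := hM.mulVec_eigenvectorBasis j
    ext i
    exact congrFun this i
  rw [real_inner_comm, hmv, real_inner_smul_left]

lemma inner_mv_self_eq {n : ℕ} {M : Matrix (Fin n) (Fin n) ℝ} (hM : M.IsHermitian) (v : E n) :
    ⟪v, mv M v⟫ = ∑ j, hM.eigenvalues j * (hM.eigenvectorBasis.repr v j)^2 := by
  rw [← LinearIsometryEquiv.inner_map_map hM.eigenvectorBasis.repr, PiLp.inner_apply]
  refine Finset.sum_congr rfl fun j _ => ?_
  rw [repr_mv hM]
  simp [RCLike.inner_apply]
  ring

lemma norm_sq_repr {n : ℕ} {M : Matrix (Fin n) (Fin n) ℝ} (hM : M.IsHermitian) (v : E n) :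
    ‖v‖^2 = ∑ j, (hM.eigenvectorBasis.repr v j)^2 := by
  rw [← real_inner_self_eq_norm_sq, ← LinearIsometryEquiv.inner_map_map hM.eigenvectorBasis.repr,
    PiLp.inner_apply]
  refine Finset.sum_congr rfl fun j _ => ?_
  simp [RCLike.inner_apply]

lemma quad_lower {n : ℕ} {M : Matrix (Fin n) (Fin n) ℝ} (hM : M.IsHermitian) (v : E n) :
    lamMin M * ‖v‖^2 ≤ ⟪v, mv M v⟫ := by
  rw [lamMin, dif_pos hM, inner_mv_self_eq hM, norm_sq_repr hM, Finset.mul_sum]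
  refine Finset.sum_le_sum fun j _ => ?_
  exact mul_le_mul_of_nonneg_right (ciInf_le (Finite.bddBelow_range _) j) (sq_nonneg _)

lemma quad_upper {n : ℕ} {M : Matrix (Fin n) (Fin n) ℝ} (hM : M.IsHermitian) (v : E n) :
    ⟪v, mv M v⟫ ≤ lamMax M * ‖v‖^2 := by
  rw [lamMax, dif_pos hM, inner_mv_self_eq hM, norm_sq_repr hM, Finset.mul_sum]
  refine Finset.sum_le_sum fun j _ => ?_
  exact mul_le_mul_of_nonneg_right (le_ciSup (Finite.bddAbove_range _) j) (sq_nonneg _)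

lemma lamMin_pos {n : ℕ} (hn : 0 < n) {M : Matrix (Fin n) (Fin n) ℝ} (hM : M.PosDef) :
    0 < lamMin M := by
  haveI : Nonempty (Fin n) := Fin.pos_iff_nonempty.1 hn
  rw [lamMin, dif_pos hM.1]
  obtain ⟨i, hi⟩ := exists_eq_ciInf_of_finite (f := hM.1.eigenvalues)
  rw [← hi]
  exact hM.eigenvalues_pos i

lemma lamMax_pos {n : ℕ} (hn : 0 < n) {M : Matrix (Fin n) (Fin n) ℝ} (hM : M.PosDef) :
    0 < lamMax M := by
  haveI : Nonempty (Fin n) := Fin.pos_iff_nonempty.1 hn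
  rw [lamMax, dif_pos hM.1]
  obtain ⟨i, hi⟩ := exists_eq_ciSup_of_finite (f := hM.1.eigenvalues)
  rw [← hi]
  exact hM.eigenvalues_pos i

end Helpers

lemma Dbound {n : ℕ} {Q P A : Matrix (Fin n) (Fin n) ℝ}
    (hQ : Q.PosDef) (hP : P.PosDef) (hLyap : P * A + Aᵀ * P = -Q)
    (hlQ : 0 < lamMin Q) (hlPmax : 0 < lamMax P)
    (e r : E n) :
    ⟪e, mv P (mv A e - r)⟫ + ⟪mv A e - r, mv P e⟫ ≤
      -(lamMin Q / (2 * lamMax P)) * ⟪e, mv P e⟫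
        + 2 * (opNorm (invSqrt Q * P))^2 * ‖r‖^2 := by
  have hSps : (matSqrt Q).PosSemidef := by
    rw [matSqrt, dif_pos hQ.posSemidef]
    exact (posSemidef_diagonal_iff.2 fun i => by
      simpa using Real.sqrt_nonneg _).mul_mul_conjTranspose_same _
  have hSS : matSqrt Q * matSqrt Q = Q := by
    rw [matSqrt, dif_pos hQ.posSemidef]
    conv_rhs => rw [hQ.1.spectral_theorem, Unitary.conjStarAlgAut_apply]
    have hU : (star hQ.posSemidef.1.eigenvectorUnitary : Matrix (Fin n) (Fin n) ℝ) *
        hQ.posSemidef.1.eigenvectorUnitary.1 = 1 := Unitary.coe_star_mul_self _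
    simp only [mul_assoc]
    rw [← mul_assoc (star _ : Matrix (Fin n) (Fin n) ℝ), hU, one_mul, ← mul_assoc (diagonal _),
      diagonal_mul_diagonal]
    congr 3
    funext i
    simp [Real.mul_self_sqrt (hQ.posSemidef.eigenvalues_nonneg i)]
  have hST : (matSqrt Q)ᵀ = matSqrt Q := by
    have := hSps.1.eq
    rwa [Matrix.conjTranspose_eq_transpose_of_trivial] at this
  have hPT : Pᵀ = P := by
    have := hP.1.eq
    rwa [Matrix.conjTranspose_eq_transpose_of_trivial] at this
  have hdet : IsUnit (matSqrt Q).det := by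
    rw [isUnit_iff_ne_zero]
    intro h0
    have h1 : (matSqrt Q).det * (matSqrt Q).det = Q.det := by rw [← Matrix.det_mul, hSS]
    have h2 := hQ.det_pos
    rw [h0, mul_zero] at h1
    rw [← h1] at h2
    exact lt_irrefl _ h2
  have hSmulinv : matSqrt Q * invSqrt Q = 1 := by
    rw [invSqrt]; exact Matrix.mul_nonsing_inv _ hdet
  have hPr : ⟪e, mv P r⟫ = ⟪mv (matSqrt Q) e, mv (invSqrt Q * P) r⟫ := by
    rw [inner_mv, hST, mv_mv, ← mul_assoc, hSmulinv, one_mul]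
  have hQu : ⟪e, mv Q e⟫ = ‖mv (matSqrt Q) e‖^2 := by
    rw [← real_inner_self_eq_norm_sq, inner_mv, hST, mv_mv, hSS]
  have h4 : ⟪r, mv P e⟫ = ⟪e, mv P r⟫ := by
    rw [real_inner_comm, inner_mv, hPT]
  have hDeq : ⟪e, mv P (mv A e - r)⟫ + ⟪mv A e - r, mv P e⟫
      = -⟪e, mv Q e⟫ - 2 * ⟪e, mv P r⟫ := by
    have e1 : ⟪e, mv P (mv A e - r)⟫ = ⟪e, mv (P*A) e⟫ - ⟪e, mv P r⟫ := by
      rw [mv_sub, inner_sub_right, mv_mv]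
    have e2 : ⟪mv A e - r, mv P e⟫ = ⟪e, mv (Aᵀ*P) e⟫ - ⟪e, mv P r⟫ := by
      rw [inner_sub_left, inner_mv A e (mv P e), mv_mv, h4]
    have e3 : ⟪e, mv (P*A) e⟫ + ⟪e, mv (Aᵀ*P) e⟫ = -⟪e, mv Q e⟫ := by
      rw [← inner_add_right, ← mv_add_mat, hLyap, mv_neg_mat, inner_neg_right]
    rw [e1, e2]
    linarith
  have hcross : |⟪mv (matSqrt Q) e, mv (invSqrt Q * P) r⟫|
      ≤ ‖mv (matSqrt Q) e‖ * ‖mv (invSqrt Q * P) r‖ := abs_real_inner_le_norm _ _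
  have hw : ‖mv (invSqrt Q * P) r‖ ≤ opNorm (invSqrt Q * P) * ‖r‖ := norm_mv_le _ r
  have hw2 : ‖mv (invSqrt Q * P) r‖^2 ≤ (opNorm (invSqrt Q * P))^2 * ‖r‖^2 := by
    nlinarith [norm_nonneg (mv (invSqrt Q * P) r), norm_nonneg r, opNorm_nonneg' (invSqrt Q * P)]
  have hQlow : lamMin Q * ‖e‖^2 ≤ ⟪e, mv Q e⟫ := quad_lower hQ.1 e
  have hVup : ⟪e, mv P e⟫ ≤ lamMax P * ‖e‖^2 := quad_upper hP.1 e
  have hVlow : lamMin P * ‖e‖^2 ≤ ⟪e, mv P e⟫ := quad_lower hP.1 e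
  have hkV : (lamMin Q / (2 * lamMax P)) * ⟪e, mv P e⟫ ≤ ⟪e, mv Q e⟫ / 2 := by
    have h1 : (lamMin Q / (2 * lamMax P)) * ⟪e, mv P e⟫
        ≤ (lamMin Q / (2 * lamMax P)) * (lamMax P * ‖e‖^2) :=
      mul_le_mul_of_nonneg_left hVup (by positivity)
    have h2 : (lamMin Q / (2 * lamMax P)) * (lamMax P * ‖e‖^2) = (lamMin Q * ‖e‖^2) / 2 := by
      field_simp
    linarith
  have habs : -(2 * ⟪e, mv P r⟫) ≤ 2 * (‖mv (matSqrt Q) e‖ * ‖mv (invSqrt Q * P) r‖) := by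
    rw [hPr]
    have := neg_abs_le ⟪mv (matSqrt Q) e, mv (invSqrt Q * P) r⟫
    nlinarith
  have hsq : 2 * (‖mv (matSqrt Q) e‖ * ‖mv (invSqrt Q * P) r‖)
      ≤ ‖mv (matSqrt Q) e‖^2 / 2 + 2 * ‖mv (invSqrt Q * P) r‖^2 := by
    nlinarith [sq_nonneg (‖mv (matSqrt Q) e‖ - 2 * ‖mv (invSqrt Q * P) r‖)]
  rw [hDeq]
  have hQe : ⟪e, mv Q e⟫ = ‖mv (matSqrt Q) e‖^2 := hQu
  linarith

set_option maxHeartbeats 1000000 in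
theorem stmt5 {nx ny nz : ℕ}
    (f : E nx → E nx) (hf : Continuous f)
    (h : E nx → E ny) (hh : Continuous h)
    (A : Matrix (Fin nz) (Fin nz) ℝ) (B : Matrix (Fin nz) (Fin ny) ℝ)
    (X : Set (E nx)) (hXne : X.Nonempty) (hXc : IsCompact X)
    (x : ℝ → E nx) (hx : ∀ t ≥ (0:ℝ), HasDerivAt x (f (x t)) t)
    (hxX : ∀ t ≥ (0:ℝ), x t ∈ X)
    (zh : ℝ → E nz)
    (hz : ∀ t ≥ (0:ℝ), HasDerivAt zh (mv A (zh t) + mv B (h (x t))) t)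
    (T : E nx → E nz) (hT : ContDiff ℝ 1 T)
    (R : E nx → E nz)
    (hR : ∀ p, R p = fderiv ℝ T p (f p) - mv A (T p) - mv B (h p))
    (Rbar : ℝ) (hRbar : Rbar = sSup ((fun p => ‖R p‖) '' X))
    (Q P : Matrix (Fin nz) (Fin nz) ℝ) (hQ : Q.PosDef) (hP : P.PosDef)
    (hLyap : P * A + Aᵀ * P = -Q) :
    limsup (fun t => ‖zh t - T (x t)‖) atTop ≤
      Real.sqrt (4 * lamMax P / (lamMin Q * lamMin P)) * opNorm (invSqrt Q * P) * Rbar := by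
  rcases Nat.eq_zero_or_pos nz with hnz | hnz
  · -- degenerate case: nz = 0
    subst hnz
    have hz0 : ∀ v : E 0, v = 0 := fun v => Subsingleton.elim v 0
    have h1 : (fun t => ‖zh t - T (x t)‖) = fun _ => (0:ℝ) := by
      funext t; rw [hz0 (zh t - T (x t)), norm_zero]
    have h2 : Rbar = 0 := by
      rw [hRbar]
      have : (fun p => ‖R p‖) '' X = {0} := by
        apply Set.eq_singleton_iff_nonempty_unique_mem.2
        refine ⟨hXne.image _, fun y hy => ?_⟩
        obtain ⟨p, _, rfl⟩ := hy
        show ‖R p‖ = 0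
        rw [hz0 (R p), norm_zero]
      rw [this, csSup_singleton]
    rw [h1, h2, mul_zero, limsup_const]
  -- main case
  have hRc : Continuous R := by
    have : R = fun p => fderiv ℝ T p (f p) - mv A (T p) - mv B (h p) := funext hR
    rw [this]
    exact (((hT.continuous_fderiv one_ne_zero).clm_apply hf).sub
      ((mv_continuous A).comp hT.continuous)).sub ((mv_continuous B).comp hh)
  have hbdd : BddAbove ((fun p => ‖R p‖) '' X) := (hXc.image hRc.norm).bddAbove
  have hRle : ∀ t ≥ (0:ℝ), ‖R (x t)‖ ≤ Rbar := fun t ht => by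
    rw [hRbar]; exact le_csSup hbdd ⟨x t, hxX t ht, rfl⟩
  have hRb0 : (0:ℝ) ≤ Rbar := le_trans (norm_nonneg _) (hRle 0 le_rfl)
  have hlQ : 0 < lamMin Q := lamMin_pos hnz hQ
  have hlP : 0 < lamMin P := lamMin_pos hnz hP
  have hlPmax : 0 < lamMax P := lamMax_pos hnz hP
  set N : ℝ := opNorm (invSqrt Q * P) with hN
  have hN0 : 0 ≤ N := opNorm_nonneg' _
  set k : ℝ := lamMin Q / (2 * lamMax P) with hk
  have hk0 : 0 < k := by positivity
  set c : ℝ := 2 * N^2 * Rbar^2 with hc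
  have hc0 : (0:ℝ) ≤ c := by positivity
  -- error signal and its derivative
  set ee : ℝ → E nz := fun t => zh t - T (x t) with hee
  have hee' : ∀ t ≥ (0:ℝ), HasDerivAt ee (mv A (ee t) - R (x t)) t := by
    intro t ht
    have hTx : HasDerivAt (fun s => T (x s)) (fderiv ℝ T (x t) (f (x t))) t :=
      ((hT.differentiable one_ne_zero).differentiableAt.hasFDerivAt).comp_hasDerivAt t (hx t ht)
    have hgoal_eq : mv A (ee t) - R (x t)
        = (mv A (zh t) + mv B (h (x t))) - fderiv ℝ T (x t) (f (x t)) := by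
      rw [hR (x t)]
      have h1 : ee t = zh t - T (x t) := rfl
      rw [h1, mv_sub]
      abel
    rw [hgoal_eq]
    exact (hz t ht).sub hTx
  -- Lyapunov function
  set V : ℝ → ℝ := fun t => ⟪ee t, mv P (ee t)⟫ with hV
  have hVD : ∀ t ≥ (0:ℝ), ∃ d, HasDerivAt V d t ∧ d ≤ -k * V t + c := by
    intro t ht
    have h1 := hee' t ht
    have h2 : HasDerivAt (fun s => mv P (ee s)) (mv P (mv A (ee t) - R (x t))) t := by
      simp only [mv_eq_lin P]
      exact (LinearMap.toContinuousLinearMap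
        (Matrix.toEuclideanLin P)).hasFDerivAt.comp_hasDerivAt t h1
    refine ⟨_, HasDerivAt.inner ℝ h1 h2, ?_⟩
    have hb := Dbound hQ hP hLyap hlQ hlPmax (ee t) (R (x t))
    have hr2 : ‖R (x t)‖^2 ≤ Rbar^2 := by nlinarith [norm_nonneg (R (x t)), hRle t ht]
    have hVt : V t = ⟪ee t, mv P (ee t)⟫ := rfl
    rw [hVt, hk, hc]
    have hN2 : 2 * N^2 * ‖R (x t)‖^2 ≤ 2 * N^2 * Rbar^2 := by nlinarith
    calc ⟪ee t, mv P (mv A (ee t) - R (x t))⟫ + ⟪mv A (ee t) - R (x t), mv P (ee t)⟫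
        ≤ -(lamMin Q / (2 * lamMax P)) * ⟪ee t, mv P (ee t)⟫ + 2 * N^2 * ‖R (x t)‖^2 := hb
      _ ≤ -(lamMin Q / (2 * lamMax P)) * ⟪ee t, mv P (ee t)⟫ + 2 * N^2 * Rbar^2 := by linarith
  -- Gronwall-type argument
  set g : ℝ → ℝ := fun t => Real.exp (k * t) * (V t - c / k) with hg
  have hgd : ∀ t ≥ (0:ℝ), ∃ d', HasDerivAt g d' t ∧ d' ≤ 0 := by
    intro t ht
    obtain ⟨d, hd, hdle⟩ := hVD t ht
    have hexp : HasDerivAt (fun s : ℝ => Real.exp (k * s)) (k * Real.exp (k * t)) t := by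
      have h1 : HasDerivAt (fun s : ℝ => k * s) k t := by
        simpa using (hasDerivAt_id t).const_mul k
      simpa [mul_comm] using h1.exp
    have hVt : HasDerivAt (fun s => V s - c / k) d t := hd.sub_const _
    refine ⟨_, hexp.mul hVt, ?_⟩
    -- derivative is k * exp (k*t) * (V t - c/k) + exp (k*t) * d
    have hck : k * (c / k) = c := mul_div_cancel₀ c hk0.ne'
    have hexp0 : (0:ℝ) < Real.exp (k * t) := Real.exp_pos _
    have : k * Real.exp (k * t) * (V t - c / k) + Real.exp (k * t) * d
        = Real.exp (k * t) * (d + k * V t - c) := by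
      linear_combination (-Real.exp (k * t)) * hck
    rw [this]
    apply mul_nonpos_of_nonneg_of_nonpos hexp0.le
    linarith
  have hgmono : AntitoneOn g (Set.Ici (0:ℝ)) := by
    apply antitoneOn_of_deriv_nonpos (convex_Ici 0)
    · intro t ht
      obtain ⟨d', hd', _⟩ := hgd t ht
      exact hd'.continuousAt.continuousWithinAt
    · intro t ht
      rw [interior_Ici] at ht
      obtain ⟨d', hd', _⟩ := hgd t ht.le
      exact hd'.differentiableAt.differentiableWithinAt
    · intro t ht
      rw [interior_Ici] at ht
      obtain ⟨d', hd', hle⟩ := hgd t ht.le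
      rw [hd'.deriv]
      exact hle
  have hVle : ∀ t ≥ (0:ℝ), V t ≤ c / k + (V 0 - c / k) * Real.exp (-(k * t)) := by
    intro t ht
    have h1 : g t ≤ g 0 := hgmono Set.self_mem_Ici ht ht
    rw [hg] at h1
    simp only [mul_zero, Real.exp_zero, one_mul] at h1
    have h2 : (0:ℝ) < Real.exp (k * t) := Real.exp_pos _
    have h3 : V t - c / k ≤ (V 0 - c / k) * Real.exp (-(k * t)) := by
      rw [Real.exp_neg, ← div_eq_mul_inv, le_div_iff₀ h2, mul_comm]
      exact h1
    linarith
  -- eventual bound on the norm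
  have hlimB : ∀ ε > (0:ℝ), ∀ᶠ t in atTop, ‖ee t‖ ≤ Real.sqrt ((c / k + ε) / lamMin P) := by
    intro ε hε
    have htend : Tendsto (fun t : ℝ => (V 0 - c / k) * Real.exp (-(k * t))) atTop (nhds 0) := by
      have h1 : Tendsto (fun t : ℝ => k * t) atTop atTop :=
        Tendsto.const_mul_atTop hk0 tendsto_id
      have h2 : Tendsto (fun t : ℝ => -(k * t)) atTop atBot := tendsto_neg_atTop_atBot.comp h1
      have h3 : Tendsto (fun t : ℝ => Real.exp (-(k * t))) atTop (nhds 0) :=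
        Real.tendsto_exp_atBot.comp h2
      have := h3.const_mul (V 0 - c / k)
      simpa using this
    have h2 : ∀ᶠ t in atTop, (V 0 - c / k) * Real.exp (-(k * t)) ≤ ε :=
      htend.eventually_le_const hε
    filter_upwards [h2, eventually_ge_atTop (0:ℝ)] with t h2t ht0
    have hVt : V t ≤ c / k + ε := le_trans (hVle t ht0) (by linarith)
    have hlow : lamMin P * ‖ee t‖^2 ≤ V t := quad_lower hP.1 (ee t)
    have h3 : ‖ee t‖^2 ≤ (c / k + ε) / lamMin P := by
      rw [le_div_iff₀ hlP]
      nlinarith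
    calc ‖ee t‖ = Real.sqrt (‖ee t‖^2) := (Real.sqrt_sq (norm_nonneg _)).symm
      _ ≤ _ := Real.sqrt_le_sqrt h3
  have hcb : IsCoboundedUnder (· ≤ ·) atTop (fun t => ‖ee t‖) :=
    isCoboundedUnder_le_of_le atTop (fun t => norm_nonneg _)
  have hkey : ∀ ε > (0:ℝ), limsup (fun t => ‖ee t‖) atTop ≤ Real.sqrt ((c / k + ε) / lamMin P) :=
    fun ε hε => limsup_le_of_le hcb (hlimB ε hε)
  have hlim2 : limsup (fun t => ‖ee t‖) atTop ≤ Real.sqrt ((c / k) / lamMin P) := by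
    have hcont : Tendsto (fun ε : ℝ => Real.sqrt ((c / k + ε) / lamMin P))
        (nhdsWithin 0 (Set.Ioi 0)) (nhds (Real.sqrt ((c / k) / lamMin P))) := by
      have hca : ContinuousAt (fun ε : ℝ => Real.sqrt ((c / k + ε) / lamMin P)) 0 := by
        apply Real.continuous_sqrt.continuousAt.comp
        exact ((continuous_const.add continuous_id).div_const _).continuousAt
      have h5 : Tendsto (fun ε : ℝ => Real.sqrt ((c / k + ε) / lamMin P))
          (nhdsWithin 0 (Set.Ioi 0)) (nhds (Real.sqrt ((c / k + 0) / lamMin P))) :=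
        hca.continuousWithinAt (s := Set.Ioi 0)
      simpa using h5
    refine ge_of_tendsto hcont ?_
    filter_upwards [self_mem_nhdsWithin] with ε hε
    exact hkey ε hε
  have hconst : Real.sqrt ((c / k) / lamMin P)
      = Real.sqrt (4 * lamMax P / (lamMin Q * lamMin P)) * N * Rbar := by
    have h1 : (c / k) / lamMin P = (4 * lamMax P / (lamMin Q * lamMin P)) * (N * Rbar)^2 := by
      rw [hc, hk]; field_simp; ring
    have h2 : (0:ℝ) ≤ 4 * lamMax P / (lamMin Q * lamMin P) := by positivity
    rw [h1, Real.sqrt_mul h2, Real.sqrt_sq (by positivity), ← mul_assoc]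
  rw [← hconst]
  exact hlim2
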